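/- Let (Σ, L, ξ) be a state property system with Cartan map κ, let Ω be the set of connection components of the closure space (Σ, κ(L)), suppose that for every ω ∈ Ω there exists s(ω) ∈ L with κ(s(ω)) = ω, let C = {⋁_i s(ω_i) | (ω_i)_i a family of elements of Ω} ∪ {0}, and let (Ω, C, η) be the associated state property system with η(ω) = ξ(p) ∩ C for p ∈ ω and Cartan map κ_η. Then the closure space (Ω, κ_η(C)) is totally disconnected: every connected subset of (Ω, κ_η(C)) contains at most one point. -/
import Mathlib


/-- A state property system `(Σ, L, ξ)`: a set of states `S`, a complete lattice `L`
(bottom `⊥ = 0`, top `⊤ = I`) and a map `ξ` sending each state to the set of properties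
actual in it, such that `0` is never actual, actual properties are closed under arbitrary
infima (of arbitrary families, in particular `⊤ = sInf ∅` is always actual), and
`a ≤ b ↔ ∀ r, a ∈ ξ r → b ∈ ξ r`. -/
structure SPS (S : Type*) (L : Type*) [CompleteLattice L] where
  ξ : S → Set L
  bot_not_mem : ∀ p, ⊥ ∉ ξ p
  sInf_mem : ∀ p, ∀ A ⊆ ξ p, sInf A ∈ ξ p
  le_iff : ∀ a b : L, a ≤ b ↔ ∀ r, a ∈ ξ r → b ∈ ξ r

/-- The Cartan map `κ : L → P(Σ)`, `κ a = {p | a ∈ ξ p}`. -/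
def SPS.cartan {S L : Type*} [CompleteLattice L] (P : SPS S L) (a : L) : Set S :=
  {p | a ∈ P.ξ p}

/-- `a` and `b` are separated by a super selection rule. -/
def SPS.ssr {S L : Type*} [CompleteLattice L] (P : SPS S L) (a b : L) : Prop :=
  ∀ p, a ⊔ b ∈ P.ξ p → a ∈ P.ξ p ∨ b ∈ P.ξ p

/-- `a` is a classical property: it has a complement `c` with `a ⊔ c = ⊤`, `a ⊓ c = ⊥`
and `a` ssr `c`. -/
def SPS.IsClassical {S L : Type*} [CompleteLattice L] (P : SPS S L) (a : L) : Prop :=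
  ∃ c : L, a ⊔ c = ⊤ ∧ a ⊓ c = ⊥ ∧ P.ssr a c

/-- `(X, F)` is a closure space: `∅ ∈ F`, `X ∈ F`, and `F` is closed under arbitrary
nonempty intersections. -/
def IsClosureSpace {X : Type*} (F : Set (Set X)) : Prop :=
  ∅ ∈ F ∧ Set.univ ∈ F ∧ ∀ G ⊆ F, G.Nonempty → ⋂₀ G ∈ F

/-- In a closure space `(X, F)`, a set is closed iff it is in `F`, open iff its complement
is in `F`, and clopen iff both. -/
def IsClopenIn {X : Type*} (F : Set (Set X)) (A : Set X) : Prop :=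
  A ∈ F ∧ Aᶜ ∈ F

/-- A closure space is connected iff its only clopen subsets are `∅` and `X`. -/
def IsConnectedCS {X : Type*} (F : Set (Set X)) : Prop :=
  ∀ A : Set X, IsClopenIn F A → A = ∅ ∨ A = Set.univ

/-- A subset `A` of a closure space `(X, F)` is connected iff the induced subspace
`(A, {F ∩ A | F ∈ F})` is connected, i.e. the only subsets of `A` that are clopen in the
trace closure space are `∅` and `A`. -/
def IsConnectedSubset {X : Type*} (F : Set (Set X)) (A : Set X) : Prop :=
  ∀ B ⊆ A, (∃ C ∈ F, B = C ∩ A) → (∃ D ∈ F, A \ B = D ∩ A) → B = ∅ ∨ B = A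

/-- The connection component of `x`: the union of all connected subsets containing `x`. -/
def component {X : Type*} (F : Set (Set X)) (x : X) : Set X :=
  ⋃₀ {A : Set X | x ∈ A ∧ IsConnectedSubset F A}

/-- The closure operator of a closure space: `cl A` is the intersection of all members of
`F` containing `A` (the least such member, i.e. the supremum operation of the lattice `F`
applied to unions). -/
def closureOf {X : Type*} (F : Set (Set X)) (A : Set X) : Set X :=
  ⋂₀ {C ∈ F | A ⊆ C}

private lemma conn_singleton' {X : Type*} (F : Set (Set X)) (x : X) :
    IsConnectedSubset F {x} := by
  intro B hB _ _
  rcases Set.subset_singleton_iff_eq.mp hB with h | h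
  · exact Or.inl h
  · exact Or.inr h

private lemma conn_sUnion' {X : Type*} (F : Set (Set X)) (S : Set (Set X)) (x : X)
    (h : ∀ A ∈ S, x ∈ A ∧ IsConnectedSubset F A) :
    IsConnectedSubset F (⋃₀ S) := by
  intro B hB hCl hOp
  obtain ⟨C, hCF, hBC⟩ := hCl
  obtain ⟨D, hDF, hBD⟩ := hOp
  have key : ∀ A ∈ S, B ∩ A = ∅ ∨ B ∩ A = A := by
    intro A hAS
    have hAU : A ⊆ ⋃₀ S := Set.subset_sUnion_of_mem hAS
    refine (h A hAS).2 (B ∩ A) Set.inter_subset_right ⟨C, hCF, ?_⟩ ⟨D, hDF, ?_⟩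
    · ext y
      constructor
      · rintro ⟨hyB, hyA⟩
        refine ⟨?_, hyA⟩
        rw [hBC] at hyB; exact hyB.1
      · rintro ⟨hyC, hyA⟩
        exact ⟨by rw [hBC]; exact ⟨hyC, hAU hyA⟩, hyA⟩
    · ext y
      constructor
      · rintro ⟨hyA, hyB⟩
        have hy : y ∈ ⋃₀ S \ B := ⟨hAU hyA, fun hy0 => hyB ⟨hy0, hyA⟩⟩
        rw [hBD] at hy
        exact ⟨hy.1, hyA⟩
      · rintro ⟨hyD, hyA⟩
        have hy : y ∈ ⋃₀ S \ B := by rw [hBD]; exact ⟨hyD, hAU hyA⟩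
        exact ⟨hyA, fun hy0 => hy.2 hy0.1⟩
  by_cases hx : x ∈ B
  · right
    refine Set.Subset.antisymm hB fun y hy => ?_
    obtain ⟨A, hAS, hyA⟩ := hy
    rcases key A hAS with h0 | h1
    · have hxBA : x ∈ B ∩ A := ⟨hx, (h A hAS).1⟩
      rw [h0] at hxBA
      exact absurd hxBA (Set.notMem_empty x)
    · have : y ∈ B ∩ A := by rw [h1]; exact hyA
      exact this.1
  · left
    ext y
    simp only [Set.mem_empty_iff_false, iff_false]
    intro hyB
    obtain ⟨A, hAS, hyA⟩ := hB hyB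
    rcases key A hAS with h0 | h1
    · have : y ∈ B ∩ A := ⟨hyB, hyA⟩
      rw [h0] at this
      exact this
    · refine hx ?_
      have : x ∈ B ∩ A := by rw [h1]; exact (h A hAS).1
      exact this.1

private lemma mem_component' {X : Type*} (F : Set (Set X)) (x : X) :
    x ∈ component F x :=
  ⟨{x}, ⟨rfl, conn_singleton' F x⟩, rfl⟩

private lemma conn_component' {X : Type*} (F : Set (Set X)) (x : X) :
    IsConnectedSubset F (component F x) :=
  conn_sUnion' F _ x fun _ hA => hA

private lemma subset_component' {X : Type*} {F : Set (Set X)} {A : Set X} {x : X}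
    (hx : x ∈ A) (hA : IsConnectedSubset F A) : A ⊆ component F x :=
  Set.subset_sUnion_of_mem ⟨hx, hA⟩

private lemma component_eq' {X : Type*} (F : Set (Set X)) {x p : X}
    (hp : p ∈ component F x) : component F p = component F x := by
  have h1 : component F x ⊆ component F p := subset_component' hp (conn_component' F x)
  have h2 : component F p ⊆ component F x :=
    subset_component' (h1 (mem_component' F x)) (conn_component' F p)
  exact Set.Subset.antisymm h2 h1

/-- Let `(Ω, C, η)` be the totally classical state property system obtained
from the decomposition of `(Σ, L, ξ)` (with `Ω` the set of connection components of
`(Σ, κ(L))`, `κ (s ω) = ω`, `C = {⋁_i s ω_i} ∪ {0}`, `η ω = ξ p ∩ C` for `p ∈ ω`), with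
Cartan map `κ_η a = {ω | a ∈ η ω}`.  Then the closure space `(Ω, κ_η(C))` is totally
disconnected: every connected subset has at most one point. -/
theorem stmt_14 {S L : Type*} [CompleteLattice L] (P : SPS S L) (s : Set S → L)
    (Ω : Set (Set S)) (hΩ : Ω = Set.range (component (Set.range P.cartan)))
    (hs : ∀ ω ∈ Ω, P.cartan (s ω) = ω)
    (C : Set L) (hC : C = {a : L | ∃ T ⊆ Ω, a = sSup (s '' T)})
    (inst : CompleteLattice ↥C)
    (hinst : ∀ a b : ↥C, inst.le a b ↔ (a : L) ≤ (b : L))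
    (Q : @SPS ↥Ω ↥C inst)
    (hQ : ∀ (ω : ↥Ω) (a : ↥C), a ∈ Q.ξ ω ↔ ∀ p ∈ (ω : Set S), (a : L) ∈ P.ξ p) :
    ∀ A : Set ↥Ω,
      IsConnectedSubset (Set.range fun a : ↥C => {ω : ↥Ω | a ∈ Q.ξ ω}) A →
      A.Subsingleton := by
  classical
  intro A hA ω₁ hω₁ ω₂ hω₂
  have hmono : ∀ {a b : L}, a ≤ b → P.cartan a ⊆ P.cartan b :=
    fun {a b} hab p hp => (P.le_iff a b).mp hab p hp
  have hle : ∀ {a b : L}, P.cartan a ⊆ P.cartan b → a ≤ b :=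
    fun {a b} h => (P.le_iff a b).mpr fun r hr => h hr
  have hconn : ∀ ω : ↥Ω, IsConnectedSubset (Set.range P.cartan) ↑ω := by
    intro ω
    have h : (↑ω : Set S) ∈ Set.range (component (Set.range P.cartan)) := by
      rw [← hΩ]; exact ω.2
    obtain ⟨x, hx⟩ := h
    exact hx ▸ conn_component' _ x
  set U : Set S := ⋃₀ ((fun ω : ↥Ω => (ω : Set S)) '' A) with hUdef
  have hsubU : ∀ ω : ↥Ω, ω ∈ A → (ω : Set S) ⊆ U :=
    fun ω hω => Set.subset_sUnion_of_mem ⟨ω, hω, rfl⟩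
  have hUconn : IsConnectedSubset (Set.range P.cartan) U := by
    intro Bt hBt hClosed hOpen
    obtain ⟨Ct, ⟨c₀, rfl⟩, hBC⟩ := hClosed
    obtain ⟨Dt, ⟨d₀, rfl⟩, hBD⟩ := hOpen
    have hcomp : ∀ ω : ↥Ω, ω ∈ A → (↑ω : Set S) ∩ Bt = ∅ ∨ (↑ω : Set S) ⊆ Bt := by
      intro ω hω
      have h1 : (↑ω : Set S) ∩ Bt = P.cartan c₀ ∩ ↑ω := by
        rw [hBC]; ext y
        constructor
        · rintro ⟨hyω, hyC, _⟩; exact ⟨hyC, hyω⟩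
        · rintro ⟨hyC, hyω⟩; exact ⟨hyω, hyC, hsubU ω hω hyω⟩
      have h2 : (↑ω : Set S) \ ((↑ω : Set S) ∩ Bt) = P.cartan d₀ ∩ ↑ω := by
        ext y
        constructor
        · rintro ⟨hyω, hyB⟩
          have hy : y ∈ U \ Bt := ⟨hsubU ω hω hyω, fun hy0 => hyB ⟨hyω, hy0⟩⟩
          rw [hBD] at hy
          exact ⟨hy.1, hyω⟩
        · rintro ⟨hyD, hyω⟩
          refine ⟨hyω, fun hy0 => ?_⟩
          have hy : y ∈ U \ Bt := by rw [hBD]; exact ⟨hyD, hsubU ω hω hyω⟩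
          exact hy.2 hy0.2
      rcases hconn ω ((↑ω : Set S) ∩ Bt) Set.inter_subset_left
        ⟨_, ⟨c₀, rfl⟩, h1⟩ ⟨_, ⟨d₀, rfl⟩, h2⟩ with h | h
      · exact Or.inl h
      · right
        intro y hy
        rw [← h] at hy
        exact hy.2
    set B : Set ↥Ω := {ω : ↥Ω | ω ∈ A ∧ (↑ω : Set S) ⊆ Bt} with hBdef
    have hBsub : B ⊆ A := fun ω hω => hω.1
    have hTB : ((fun ω : ↥Ω => (ω : Set S)) '' B) ⊆ Ω := by
      rintro σ ⟨ω, _, rfl⟩; exact ω.2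
    have hTD : ((fun ω : ↥Ω => (ω : Set S)) '' (A \ B)) ⊆ Ω := by
      rintro σ ⟨ω, _, rfl⟩; exact ω.2
    have hcC : sSup (s '' ((fun ω : ↥Ω => (ω : Set S)) '' B)) ∈ C := by
      rw [hC]; exact ⟨_, hTB, rfl⟩
    have hdC : sSup (s '' ((fun ω : ↥Ω => (ω : Set S)) '' (A \ B))) ∈ C := by
      rw [hC]; exact ⟨_, hTD, rfl⟩
    have hmemω : ∀ (ω : ↥Ω) (p : S), p ∈ (↑ω : Set S) → s ↑ω ∈ P.ξ p := by
      intro ω p hp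
      rw [← hs ↑ω ω.2] at hp
      exact hp
    have hXc : {ω : ↥Ω | (⟨_, hcC⟩ : ↥C) ∈ Q.ξ ω} ∩ A = B := by
      ext ω
      constructor
      · rintro ⟨hξ, hωA⟩
        refine ⟨hωA, ?_⟩
        have hc0 : sSup (s '' ((fun ω : ↥Ω => (ω : Set S)) '' B)) ≤ c₀ := by
          refine sSup_le ?_
          rintro x ⟨σ, ⟨ω', hω', rfl⟩, rfl⟩
          refine hle ?_
          rw [hs ↑ω' ω'.2]
          intro y hy
          have hyB : y ∈ Bt := hω'.2 hy
          rw [hBC] at hyB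
          exact hyB.1
        intro y hy
        have hyc : sSup (s '' ((fun ω : ↥Ω => (ω : Set S)) '' B)) ∈ P.ξ y :=
          (hQ ω ⟨_, hcC⟩).mp hξ y hy
        rw [hBC]
        exact ⟨hmono hc0 hyc, hsubU ω hωA hy⟩
      · rintro ⟨hωA, hωB⟩
        refine ⟨(hQ ω ⟨_, hcC⟩).mpr fun p hp => ?_, hωA⟩
        have h1 : s ↑ω ≤ sSup (s '' ((fun ω : ↥Ω => (ω : Set S)) '' B)) :=
          le_sSup ⟨↑ω, ⟨ω, ⟨hωA, hωB⟩, rfl⟩, rfl⟩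
        exact hmono h1 (hmemω ω p hp)
    have hXd : {ω : ↥Ω | (⟨_, hdC⟩ : ↥C) ∈ Q.ξ ω} ∩ A = A \ B := by
      ext ω
      constructor
      · rintro ⟨hξ, hωA⟩
        refine ⟨hωA, fun hωB => ?_⟩
        have hd0 : sSup (s '' ((fun ω : ↥Ω => (ω : Set S)) '' (A \ B))) ≤ d₀ := by
          refine sSup_le ?_
          rintro x ⟨σ, ⟨ω', hω', rfl⟩, rfl⟩
          refine hle ?_
          rw [hs ↑ω' ω'.2]
          intro y hy
          rcases hcomp ω' hω'.1 with h | h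
          · have hyU : y ∈ U \ Bt := by
              refine ⟨hsubU ω' hω'.1 hy, fun hy0 => ?_⟩
              have : y ∈ (↑ω' : Set S) ∩ Bt := ⟨hy, hy0⟩
              rw [h] at this
              exact this
            rw [hBD] at hyU
            exact hyU.1
          · exact absurd ⟨hω'.1, h⟩ hω'.2
        have hxne : (↑ω : Set S).Nonempty := by
          have h : (↑ω : Set S) ∈ Set.range (component (Set.range P.cartan)) := by
            rw [← hΩ]; exact ω.2
          obtain ⟨x, hx⟩ := h
          exact ⟨x, hx ▸ mem_component' _ x⟩
        obtain ⟨p, hp⟩ := hxne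
        have hpd : sSup (s '' ((fun ω : ↥Ω => (ω : Set S)) '' (A \ B))) ∈ P.ξ p :=
          (hQ ω ⟨_, hdC⟩).mp hξ p hp
        have hpU : p ∈ U \ Bt := by
          rw [hBD]
          exact ⟨hmono hd0 hpd, hsubU ω hωA hp⟩
        exact hpU.2 (hωB.2 hp)
      · rintro ⟨hωA, hωB⟩
        refine ⟨(hQ ω ⟨_, hdC⟩).mpr fun p hp => ?_, hωA⟩
        have h1 : s ↑ω ≤ sSup (s '' ((fun ω : ↥Ω => (ω : Set S)) '' (A \ B))) :=
          le_sSup ⟨↑ω, ⟨ω, ⟨hωA, hωB⟩, rfl⟩, rfl⟩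
        exact hmono h1 (hmemω ω p hp)
    rcases hA B hBsub ⟨_, ⟨⟨_, hcC⟩, rfl⟩, hXc.symm⟩ ⟨_, ⟨⟨_, hdC⟩, rfl⟩, hXd.symm⟩
      with hB0 | hBA
    · left
      ext y
      simp only [Set.mem_empty_iff_false, iff_false]
      intro hyB
      obtain ⟨σ, ⟨ω, hωA, rfl⟩, hyω⟩ := hBt hyB
      rcases hcomp ω hωA with h | h
      · have : y ∈ (↑ω : Set S) ∩ Bt := ⟨hyω, hyB⟩
        rw [h] at this
        exact this
      · have : ω ∈ B := ⟨hωA, h⟩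
        rw [hB0] at this
        exact this
    · right
      refine Set.Subset.antisymm hBt fun y hy => ?_
      obtain ⟨σ, ⟨ω, hωA, rfl⟩, hyω⟩ := hy
      have hωB : ω ∈ B := by rw [hBA]; exact hωA
      exact hωB.2 hyω
  have h1 : (↑ω₁ : Set S) ∈ Set.range (component (Set.range P.cartan)) := by
    rw [← hΩ]; exact ω₁.2
  obtain ⟨x₁, hx₁⟩ := h1
  have h2 : (↑ω₂ : Set S) ∈ Set.range (component (Set.range P.cartan)) := by
    rw [← hΩ]; exact ω₂.2
  obtain ⟨x₂, hx₂⟩ := h2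
  have hx₁mem : x₁ ∈ (↑ω₁ : Set S) := hx₁ ▸ mem_component' _ x₁
  have hx₂mem : x₂ ∈ (↑ω₂ : Set S) := hx₂ ▸ mem_component' _ x₂
  have hUsub : U ⊆ component (Set.range P.cartan) x₁ :=
    subset_component' (hsubU ω₁ hω₁ hx₁mem) hUconn
  have hx₂in : x₂ ∈ component (Set.range P.cartan) x₁ := hUsub (hsubU ω₂ hω₂ hx₂mem)
  have hcc : component (Set.range P.cartan) x₂ = component (Set.range P.cartan) x₁ :=
    component_eq' _ hx₂in
  refine Subtype.ext ?_
  rw [← hx₁, ← hx₂, hcc]
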